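/- If G is a graph in which no two leaves are at distance exactly 4 apart, then in any residual graph R of the total domination game on G, any two targeted support vertices (white vertices with a white leaf neighbor in R) are either adjacent or at distance at least 3 apart in R. -/

import Mathlib

open SimpleGraph Finset

inductive GameColor | white | green | blue | red
deriving DecidableEq

def GameColor.weight : GameColor → ℕ
  | white => 3
  | green => 2
  | blue => 1
  | red => 0

variable {V : Type} [Fintype V] [DecidableEq V]

/-- The set of vertices totally dominated by the played set `D`. -/
def totDom (G : SimpleGraph V) [DecidableRel G.Adj] (D : Finset V) : Finset V :=
  Finset.univ.filter fun u => ∃ v ∈ D, G.Adj u v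

/-- A vertex `v` is a legal move if playing it totally dominates a new vertex. -/
def isLegal (G : SimpleGraph V) [DecidableRel G.Adj] (D : Finset V) (v : V) : Prop :=
  ∃ u, G.Adj v u ∧ u ∉ totDom G D

instance (G : SimpleGraph V) [DecidableRel G.Adj] (D : Finset V) :
    DecidablePred (isLegal G D) := fun v =>
  decidable_of_iff (∃ u, G.Adj v u ∧ u ∉ totDom G D) Iff.rfl

/-- The color of a vertex in the partially total dominated graph with played set `D`. -/
def colorOf (G : SimpleGraph V) [DecidableRel G.Adj] (D : Finset V) (v : V) : GameColor :=
  if v ∈ totDom G D then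
    (if isLegal G D v then .blue else .red)
  else (if v ∈ D then .green else .white)

/-- The total weight of the colored graph. -/
def totalWeight (G : SimpleGraph V) [DecidableRel G.Adj] (D : Finset V) : ℕ :=
  ∑ v, (colorOf G D v).weight

/-- The residualGraph graph: delete red vertices and blue–blue edges. -/
def residualGraph (G : SimpleGraph V) [DecidableRel G.Adj] (D : Finset V) : SimpleGraph V where
  Adj u w := G.Adj u w ∧ colorOf G D u ≠ .red ∧ colorOf G D w ≠ .red ∧
      ¬(colorOf G D u = .blue ∧ colorOf G D w = .blue)
  symm := ⟨fun u w ⟨h, a, b, c⟩ => ⟨h.symm, b, a, fun ⟨x, y⟩ => c ⟨y, x⟩⟩⟩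
  loopless := ⟨fun u ⟨h, _⟩ => G.ne_of_adj h rfl⟩

instance (G : SimpleGraph V) [DecidableRel G.Adj] (D : Finset V) :
    DecidableRel (residualGraph G D).Adj := fun u w =>
  decidable_of_iff (G.Adj u w ∧ colorOf G D u ≠ .red ∧ colorOf G D w ≠ .red ∧
      ¬(colorOf G D u = .blue ∧ colorOf G D w = .blue)) Iff.rfl

def legalMoves (G : SimpleGraph V) [DecidableRel G.Adj] (D : Finset V) : Finset V :=
  Finset.univ.filter (isLegal G D)

/-- The value of the total domination game from position `D` with `fuel` moves allowed,
where `isDom = true` when it is Dominator's turn (Dominator minimizes, Staller maximizes).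
Since each legal move totally dominates a new vertex, fuel `Fintype.card V` always suffices. -/
def gameVal (G : SimpleGraph V) [DecidableRel G.Adj] : Bool → ℕ → Finset V → ℕ
  | _, 0, _ => 0
  | isDom, n + 1, D =>
    if h : (legalMoves G D).Nonempty then
      if isDom then 1 + (legalMoves G D).inf' h fun v => gameVal G false n (insert v D)
      else 1 + (legalMoves G D).sup' h fun v => gameVal G true n (insert v D)
    else 0

/-- The game total domination number `γ_tg(G)`: Dominator starts, both play optimally. -/
def gtd (G : SimpleGraph V) [DecidableRel G.Adj] : ℕ :=
  gameVal G true (Fintype.card V) ∅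

lemma white_not_totDom (G : SimpleGraph V) [DecidableRel G.Adj] (D : Finset V) {v : V}
    (h : colorOf G D v = .white) : v ∉ totDom G D := by
  intro hv
  simp only [colorOf, hv, if_true] at h
  split at h <;> simp_all

lemma white_adj_iff (G : SimpleGraph V) [DecidableRel G.Adj] (D : Finset V) {v : V}
    (h : colorOf G D v = .white) (y : V) :
    (residualGraph G D).Adj v y ↔ G.Adj v y := by
  constructor
  · exact fun hy => hy.1
  · intro hy
    have hv := white_not_totDom G D h
    refine ⟨hy, by simp [h], ?_, ?_⟩
    · intro hred
      simp only [colorOf] at hred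
      split at hred
      · split at hred
        · simp_all
        · rename_i _ hleg
          exact hleg ⟨v, hy.symm, hv⟩
      · split at hred <;> simp_all
    · rintro ⟨hb, _⟩; simp [h] at hb

lemma white_neighborFinset_eq (G : SimpleGraph V) [DecidableRel G.Adj] (D : Finset V) {v : V}
    (h : colorOf G D v = .white) :
    (residualGraph G D).neighborFinset v = G.neighborFinset v := by
  ext y
  simp [white_adj_iff G D h]

lemma dist_ge_of_unique_nbr (G : SimpleGraph V) {x w y : V}
    (huniq : ∀ z, G.Adj x z → z = w) (hxy : x ≠ y) (hr : G.Reachable x y) :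
    1 + G.dist w y ≤ G.dist x y := by
  obtain ⟨p, hp⟩ := hr.exists_walk_length_eq_dist
  cases p with
  | nil => exact absurd rfl hxy
  | cons h q =>
    obtain rfl := huniq _ h
    have := SimpleGraph.dist_le q
    simp only [SimpleGraph.Walk.length_cons] at hp
    omega

/-- If no two leaves of `G` are at distance exactly 4 apart, then any two
distinct targeted support vertices (white vertices with a white leaf neighbor) of a residual
graph are adjacent or at distance at least 3 apart in the residual graph. -/
theorem stmt18 (G : SimpleGraph V) [DecidableRel G.Adj] (D : Finset V)
    (hleaf : ∀ a b, G.degree a = 1 → G.degree b = 1 → G.dist a b ≠ 4) :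
    ∀ w w' : V, w ≠ w' →
      (colorOf G D w = .white ∧ ∃ x, (residualGraph G D).Adj w x ∧
        colorOf G D x = .white ∧ (residualGraph G D).degree x = 1) →
      (colorOf G D w' = .white ∧ ∃ x', (residualGraph G D).Adj w' x' ∧
        colorOf G D x' = .white ∧ (residualGraph G D).degree x' = 1) →
      (residualGraph G D).Adj w w' ∨
        ((residualGraph G D).Reachable w w' → 3 ≤ (residualGraph G D).dist w w') := by
  rintro w w' hne ⟨hw, x, hwx, hx, hdx⟩ ⟨hw', x', hwx', hx', hdx'⟩
  set R := residualGraph G D with hR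
  by_cases hadj : R.Adj w w'
  · exact Or.inl hadj
  refine Or.inr fun hreach => ?_
  by_contra hlt
  push_neg at hlt
  interval_cases hd : R.dist w w'
  · exact hne (hreach.dist_eq_zero_iff.mp hd)
  · exact hadj (SimpleGraph.dist_eq_one_iff_adj.mp hd)
  · -- extract the middle vertex z
    obtain ⟨p, hp⟩ := hreach.exists_walk_length_eq_dist
    rw [hd] at hp
    cases p with
    | nil => simp at hp
    | cons h q =>
      cases q with
      | nil => simp at hp
      | cons h' q' =>
        cases q' with
        | nil =>
          rename_i z
          -- h : R.Adj w z, h' : R.Adj z w'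
          -- degrees in G
          have hdegx : G.degree x = 1 := by
            rw [← SimpleGraph.card_neighborFinset_eq_degree,
              ← white_neighborFinset_eq G D hx, SimpleGraph.card_neighborFinset_eq_degree, hdx]
          have hdegx' : G.degree x' = 1 := by
            rw [← SimpleGraph.card_neighborFinset_eq_degree,
              ← white_neighborFinset_eq G D hx', SimpleGraph.card_neighborFinset_eq_degree, hdx']
          -- unique neighbors
          have huniq : ∀ z', G.Adj x z' → z' = w := by
            intro z' hz'
            have h1 : z' ∈ G.neighborFinset x := by simpa using hz'
            have h2 : w ∈ G.neighborFinset x := by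
              simpa using ((white_adj_iff G D hx w).mp hwx.symm).symm.symm
            have hcard : (G.neighborFinset x).card = 1 := by
              rw [SimpleGraph.card_neighborFinset_eq_degree]; exact hdegx
            obtain ⟨a, ha⟩ := Finset.card_eq_one.mp hcard
            rw [ha] at h1 h2
            simp_all
          have huniq' : ∀ z', G.Adj x' z' → z' = w' := by
            intro z' hz'
            have h1 : z' ∈ G.neighborFinset x' := by simpa using hz'
            have h2 : w' ∈ G.neighborFinset x' := by
              simpa using ((white_adj_iff G D hx' w').mp hwx'.symm)
            have hcard : (G.neighborFinset x').card = 1 := by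
              rw [SimpleGraph.card_neighborFinset_eq_degree]; exact hdegx'
            obtain ⟨a, ha⟩ := Finset.card_eq_one.mp hcard
            rw [ha] at h1 h2
            simp_all
          -- G adjacencies from R adjacencies
          have gwx : G.Adj w x := hwx.1
          have gwx' : G.Adj w' x' := hwx'.1
          have gwz : G.Adj w z := h.1
          have gzw' : G.Adj z w' := h'.1
          -- x ≠ x'
          have hxx' : x ≠ x' := by
            rintro rfl
            exact hne (huniq w hwx.1.symm ▸ huniq w' hwx'.1.symm ▸ rfl)
          -- w ≠ x', x ≠ w'
          have hwx'ne : w ≠ x' := by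
            rintro rfl
            exact hadj hwx'.symm
          have hxwne : x ≠ w' := by
            rintro rfl
            exact hadj hwx
          -- w and w' not G-adjacent
          have hGadj : ¬ G.Adj w w' := fun hG => hadj ((white_adj_iff G D hw w').mpr hG)
          -- upper bound: walk of length 4
          have hle : G.dist x x' ≤ 4 := by
            simpa using SimpleGraph.dist_le
              (Walk.cons gwx.symm (.cons gwz (.cons gzw' (.cons gwx' .nil))))
          have hreachxx' : G.Reachable x x' :=
            ⟨.cons gwx.symm (.cons gwz (.cons gzw' (.cons gwx' .nil)))⟩
          -- lower bounds
          have hd1 : 1 + G.dist w x' ≤ G.dist x x' :=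
            dist_ge_of_unique_nbr G huniq hxx' hreachxx'
          have hreachwx' : G.Reachable w x' := ⟨.cons gwz (.cons gzw' (.cons gwx' .nil))⟩
          have hd2 : 1 + G.dist w' w ≤ G.dist x' w :=
            dist_ge_of_unique_nbr G huniq' (Ne.symm hwx'ne) hreachwx'.symm
          rw [show G.dist x' w = G.dist w x' from SimpleGraph.dist_comm,
            show G.dist w' w = G.dist w w' from SimpleGraph.dist_comm] at hd2
          have hww2 : 2 ≤ G.dist w w' := by
            have hpos : 0 < G.dist w w' := SimpleGraph.Reachable.pos_dist_of_ne
              ⟨.cons gwz (.cons gzw' .nil)⟩ hne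
            rcases Nat.lt_or_ge (G.dist w w') 2 with hl | hl
            · interval_cases hdd : G.dist w w'
              exact absurd (SimpleGraph.dist_eq_one_iff_adj.mp hdd) hGadj
            · exact hl
          have : G.dist x x' = 4 := by omega
          exact hleaf x x' hdegx hdegx' this
        | cons h'' q'' => simp at hp
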